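/- Any (Λ×S×T, w, 0, λ) 3-dimensional optical orthogonal code C satisfies |C| ≤ ⌊(ΛS/w)·⌊T(ΛS−1)/(w−1)·⌊⋯⌊T(ΛS−λ)/(w−λ)⌋⋯⌋⌋⌋ (iterated floor Johnson bound for ideal 3D OOCs). -/

import Mathlib

/-- Cyclic shift by `t` in the temporal (third) coordinate of a `Λ×S×T` binary array,
viewed as a finite set of pulse positions. -/
def tshift {Λ S T : ℕ} (t : Fin T) (A : Finset (Fin Λ × Fin S × Fin T)) :
    Finset (Fin Λ × Fin S × Fin T) :=
  A.image fun p => (p.1, p.2.1, p.2.2 + t)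

/-- A `(Λ×S×T, w, λa, λc)` 3-dimensional optical orthogonal code. -/
def Is3DOOC {Λ S T : ℕ} (w la lc : ℕ) (C : Finset (Finset (Fin Λ × Fin S × Fin T))) : Prop :=
  (∀ A ∈ C, A.card = w) ∧
  (∀ A ∈ C, ∀ t : Fin T, (t : ℕ) ≠ 0 → (A ∩ tshift t A).card ≤ la) ∧
  (∀ A ∈ C, ∀ B ∈ C, A ≠ B → ∀ t : Fin T, (A ∩ tshift t B).card ≤ lc)

/-- The nested part of the Johnson bound for ideal 3D OOCs:
`johnsonNest L T w lam lam = ⌊T(L−1)/(w−1)·⌊⋯⌊T(L−lam)/(w−lam)⌋⋯⌋⌋`. -/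
def johnsonNest (L T w lam : ℕ) : ℕ → ℕ
  | 0 => 1
  | i + 1 => T * (L - (lam - i)) * johnsonNest L T w lam i / (w - (lam - i))

namespace OOC7

variable {Λ S T : ℕ}

/-- Spatial column of a pulse position. -/
def col (p : Fin Λ × Fin S × Fin T) : Fin Λ × Fin S := (p.1, p.2.1)

lemma val_ne_zero [NeZero T] (a : Fin T) (h : a ≠ 0) : (a : ℕ) ≠ 0 :=
  fun hv => h (Fin.ext hv)

lemma tshift_injective (t : Fin T) :
    Function.Injective (fun p : Fin Λ × Fin S × Fin T => (p.1, p.2.1, p.2.2 + t)) := by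
  haveI : NeZero T := ⟨t.pos.ne'⟩
  rintro ⟨a, b, c⟩ ⟨d, e, f⟩ h
  simp only [Prod.mk.injEq] at h
  obtain ⟨h1, h2, h3⟩ := h
  have : c = f := add_right_cancel h3
  simp_all

lemma tshift_card (t : Fin T) (A : Finset (Fin Λ × Fin S × Fin T)) :
    (tshift t A).card = A.card :=
  Finset.card_image_of_injective _ (tshift_injective t)

lemma tshift_inter (t : Fin T) (A B : Finset (Fin Λ × Fin S × Fin T)) :
    tshift t (A ∩ B) = tshift t A ∩ tshift t B :=
  Finset.image_inter _ _ (tshift_injective t)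

lemma tshift_tshift (t s : Fin T) (A : Finset (Fin Λ × Fin S × Fin T)) :
    tshift s (tshift t A) = tshift (t + s) A := by
  unfold tshift
  rw [Finset.image_image]
  apply Finset.image_congr
  intro p _
  simp [Function.comp, add_assoc]

lemma tshift_zero [NeZero T] (A : Finset (Fin Λ × Fin S × Fin T)) :
    tshift 0 A = A := by
  unfold tshift
  have : (fun p : Fin Λ × Fin S × Fin T => (p.1, p.2.1, p.2.2 + (0 : Fin T))) = id := by
    funext p; simp
  rw [this, Finset.image_id]

lemma tshift_cancel [NeZero T] (t : Fin T) (A : Finset (Fin Λ × Fin S × Fin T)) :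
    tshift (-t) (tshift t A) = A := by
  rw [tshift_tshift, add_neg_cancel, tshift_zero]

lemma card_filter_col (c : Finset (Fin Λ × Fin S)) :
    (Finset.univ.filter (fun q : Fin Λ × Fin S × Fin T => col q ∉ c)).card
      = (Λ * S - c.card) * T := by
  classical
  have hset : Finset.univ.filter (fun q : Fin Λ × Fin S × Fin T => col q ∉ c)
      = (((Finset.univ : Finset (Fin Λ × Fin S)) \ c) ×ˢ (Finset.univ : Finset (Fin T))).map
          (Equiv.prodAssoc (Fin Λ) (Fin S) (Fin T)).toEmbedding := by
    ext ⟨a, b, t⟩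
    simp [Finset.mem_map_equiv, Equiv.prodAssoc, col]
    exact ⟨fun h => (Finset.mem_filter.mp h).2, fun h => Finset.mem_filter.mpr ⟨Finset.mem_univ _, h⟩⟩
  rw [hset, Finset.card_map, Finset.card_product, Finset.card_sdiff_of_subset (Finset.subset_univ _),
    Finset.card_univ, Finset.card_univ, Fintype.card_prod, Fintype.card_fin,
    Fintype.card_fin, Fintype.card_fin]

/-- Counting lemma: double counting pairs (member containing `P`, pulse outside `P`). -/
lemma count (w m : ℕ) (F : Finset (Finset (Fin Λ × Fin S × Fin T)))
    (hw : ∀ X ∈ F, X.card = w)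
    (hcol : ∀ X ∈ F, ∀ p ∈ X, ∀ q ∈ X, col p = col q → p = q)
    (P : Finset (Fin Λ × Fin S × Fin T))
    (hm : ∀ q : Fin Λ × Fin S × Fin T, q ∉ P →
      (F.filter (fun X => insert q P ⊆ X)).card ≤ m) :
    (w - P.card) * (F.filter (fun X => P ⊆ X)).card
      ≤ T * (Λ * S - P.card) * m := by
  classical
  set FP := F.filter (fun X => P ⊆ X) with hFPdef
  rcases FP.eq_empty_or_nonempty with he | ⟨X₀, hX₀⟩
  · simp [he]
  · have hX₀F : X₀ ∈ F := (Finset.mem_filter.mp hX₀).1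
    have hPX₀ : P ⊆ X₀ := (Finset.mem_filter.mp hX₀).2
    -- P has distinct columns
    have hPim : (P.image col).card = P.card := by
      apply Finset.card_image_of_injOn
      intro p hp q hq hpq
      exact hcol X₀ hX₀F p (hPX₀ hp) q (hPX₀ hq) hpq
    set Q : Finset (Fin Λ × Fin S × Fin T) :=
      Finset.univ.filter (fun q => col q ∉ P.image col) with hQdef
    have hQP : ∀ q ∈ Q, q ∉ P := by
      intro q hq hqP
      have := (Finset.mem_filter.mp hq).2
      exact this (Finset.mem_image_of_mem col hqP)
    have hQcard : Q.card = (Λ * S - P.card) * T := by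
      rw [hQdef, card_filter_col, hPim]
    -- each member's extra pulses lie exactly in Q
    have hXP : ∀ X ∈ FP, X \ P = Q.filter (fun q => q ∈ X) := by
      intro X hX
      have hXF : X ∈ F := (Finset.mem_filter.mp hX).1
      have hPX : P ⊆ X := (Finset.mem_filter.mp hX).2
      ext q
      simp only [Finset.mem_sdiff, hQdef, Finset.mem_filter, Finset.mem_univ, true_and]
      constructor
      · rintro ⟨hqX, hqP⟩
        refine ⟨?_, hqX⟩
        intro hcolq
        obtain ⟨p, hpP, hpq⟩ := Finset.mem_image.mp hcolq
        have hpq' : p = q := hcol X hXF p (hPX hpP) q hqX hpq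
        exact hqP (hpq' ▸ hpP)
      · rintro ⟨hcolq, hqX⟩
        exact ⟨hqX, fun hqP => hcolq (Finset.mem_image_of_mem col hqP)⟩
    calc (w - P.card) * FP.card
        = ∑ _X ∈ FP, (w - P.card) := by rw [Finset.sum_const, smul_eq_mul, mul_comm]
      _ = ∑ X ∈ FP, (X \ P).card := by
          apply Finset.sum_congr rfl
          intro X hX
          have hXF : X ∈ F := (Finset.mem_filter.mp hX).1
          have hPX : P ⊆ X := (Finset.mem_filter.mp hX).2
          rw [Finset.card_sdiff_of_subset hPX, hw X hXF]
      _ = ∑ X ∈ FP, (Q.filter (fun q => q ∈ X)).card :=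
          Finset.sum_congr rfl (fun X hX => by rw [hXP X hX])
      _ = ∑ X ∈ FP, ∑ q ∈ Q, (if q ∈ X then 1 else 0) :=
          Finset.sum_congr rfl (fun X _ => Finset.card_filter _ _)
      _ = ∑ q ∈ Q, ∑ X ∈ FP, (if q ∈ X then 1 else 0) := Finset.sum_comm
      _ = ∑ q ∈ Q, (FP.filter (fun X => q ∈ X)).card :=
          Finset.sum_congr rfl (fun q _ => (Finset.card_filter _ _).symm)
      _ = ∑ q ∈ Q, (F.filter (fun X => insert q P ⊆ X)).card := by
          apply Finset.sum_congr rfl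
          intro q _
          rw [hFPdef, Finset.filter_filter]
          apply congrArg
          apply Finset.filter_congr
          intro X _
          simp only [Finset.insert_subset_iff, eq_iff_iff]
          tauto
      _ ≤ ∑ q ∈ Q, m := Finset.sum_le_sum (fun q hq => hm q (hQP q hq))
      _ = Q.card * m := by rw [Finset.sum_const, smul_eq_mul]
      _ = T * (Λ * S - P.card) * m := by rw [hQcard]; ring

/-- The nested induction: bound on the number of members containing a fixed set. -/
lemma nest (w lam : ℕ) (hlw : lam < w) (F : Finset (Finset (Fin Λ × Fin S × Fin T)))
    (hw : ∀ X ∈ F, X.card = w)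
    (hcol : ∀ X ∈ F, ∀ p ∈ X, ∀ q ∈ X, col p = col q → p = q)
    (hint : ∀ X ∈ F, ∀ Y ∈ F, X ≠ Y → (X ∩ Y).card ≤ lam) :
    ∀ k, k ≤ lam → ∀ P : Finset (Fin Λ × Fin S × Fin T), P.card = lam - k + 1 →
      (F.filter (fun X => P ⊆ X)).card ≤ johnsonNest (Λ * S) T w lam k := by
  intro k
  induction k with
  | zero =>
    intro _ P hP
    have h0 : johnsonNest (Λ * S) T w lam 0 = 1 := rfl
    rw [h0]
    apply Finset.card_le_one.mpr
    intro X hX Y hY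
    by_contra hne
    have hXF : X ∈ F := (Finset.mem_filter.mp hX).1
    have hYF : Y ∈ F := (Finset.mem_filter.mp hY).1
    have hPX : P ⊆ X := (Finset.mem_filter.mp hX).2
    have hPY : P ⊆ Y := (Finset.mem_filter.mp hY).2
    have hle : P.card ≤ (X ∩ Y).card :=
      Finset.card_le_card (Finset.subset_inter hPX hPY)
    have := hint X hXF Y hYF hne
    omega
  | succ k ih =>
    intro hk P hP
    have hklam : k ≤ lam := Nat.le_of_succ_le hk
    have hPcard : P.card = lam - k := by omega
    have hpos : 0 < w - (lam - k) := by omega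
    have h1 : (w - P.card) * (F.filter (fun X => P ⊆ X)).card
        ≤ T * (Λ * S - P.card) * johnsonNest (Λ * S) T w lam k := by
      apply count w _ F hw hcol P
      intro q hq
      apply ih hklam
      rw [Finset.card_insert_of_notMem hq, hP]
      omega
    rw [hPcard] at h1
    show _ ≤ T * (Λ * S - (lam - k)) * johnsonNest (Λ * S) T w lam k / (w - (lam - k))
    rw [Nat.le_div_iff_mul_le hpos]
    calc (F.filter (fun X => P ⊆ X)).card * (w - (lam - k))
        = (w - (lam - k)) * (F.filter (fun X => P ⊆ X)).card := mul_comm _ _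
      _ ≤ _ := h1

end OOC7

/-- Johnson bound for ideal 3D OOCs: any `(Λ×S×T, w, 0, λ)`-OOC `C` satisfies
`|C| ≤ ⌊(ΛS/w)·⌊T(ΛS−1)/(w−1)·⌊⋯⌊T(ΛS−λ)/(w−λ)⌋⋯⌋⌋⌋`. -/
theorem stmt_7 (Λ S T w lam : ℕ) (hlw : lam < w)
    (C : Finset (Finset (Fin Λ × Fin S × Fin T))) (h : Is3DOOC w 0 lam C) :
    C.card ≤ Λ * S * johnsonNest (Λ * S) T w lam lam / w := by
  classical
  obtain ⟨hcard, hauto, hcross⟩ := h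
  have hwpos : 0 < w := lt_of_le_of_lt (Nat.zero_le lam) hlw
  rcases Nat.eq_zero_or_pos T with hT | hT
  · -- no time slots: the code must be empty
    subst hT
    have hC : C = ∅ := by
      apply Finset.eq_empty_of_forall_notMem
      intro A hA
      have hAe : A = ∅ := Finset.eq_empty_of_forall_notMem (fun p => p.2.2.elim0)
      have := hcard A hA
      rw [hAe, Finset.card_empty] at this
      omega
    simp [hC]
  · haveI : NeZero T := ⟨hT.ne'⟩
    set J := johnsonNest (Λ * S) T w lam lam with hJ
    set F := Finset.image (fun p : Finset (Fin Λ × Fin S × Fin T) × Fin T => tshift p.2 p.1)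
        (C ×ˢ (Finset.univ : Finset (Fin T))) with hF
    have hshift_eq : ∀ A B : Finset (Fin Λ × Fin S × Fin T), ∀ t s : Fin T,
        tshift t A = tshift s B → A = tshift (s - t) B := by
      intro A B t s hts
      calc A = tshift (-t) (tshift t A) := (OOC7.tshift_cancel t A).symm
        _ = tshift (-t) (tshift s B) := by rw [hts]
        _ = tshift (s - t) B := by rw [OOC7.tshift_tshift]; congr 1; abel
    -- members of F
    have hmem : ∀ X ∈ F, ∃ A ∈ C, ∃ t : Fin T, X = tshift t A := by
      intro X hX
      rw [hF] at hX
      obtain ⟨⟨A, t⟩, hp, rfl⟩ := Finset.mem_image.mp hX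
      exact ⟨A, (Finset.mem_product.mp hp).1, t, rfl⟩
    -- weights
    have hwF : ∀ X ∈ F, X.card = w := by
      intro X hX
      obtain ⟨A, hA, t, rfl⟩ := hmem X hX
      rw [OOC7.tshift_card, hcard A hA]
    -- distinct columns within each codeword (from ideal autocorrelation)
    have hcolC : ∀ A ∈ C, ∀ p ∈ A, ∀ q ∈ A, OOC7.col p = OOC7.col q → p = q := by
      rintro A hA ⟨a, b, c⟩ hp ⟨d, e, f⟩ hq hpq
      simp only [OOC7.col, Prod.mk.injEq] at hpq
      obtain ⟨h1, h2⟩ := hpq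
      subst h1; subst h2
      by_contra hne
      have h3 : c ≠ f := by
        intro h3; exact hne (by rw [h3])
      have hu0 : f - c ≠ 0 := sub_ne_zero.mpr (Ne.symm h3)
      have hqmem : (a, b, f) ∈ tshift (f - c) A := by
        apply Finset.mem_image.mpr
        refine ⟨(a, b, c), hp, ?_⟩
        simp only [Prod.mk.injEq, true_and]
        abel
      have h0 := hauto A hA (f - c) (OOC7.val_ne_zero _ hu0)
      have hmem2 : (a, b, f) ∈ A ∩ tshift (f - c) A := Finset.mem_inter.mpr ⟨hq, hqmem⟩
      have := Finset.card_pos.mpr ⟨(a, b, f), hmem2⟩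
      omega
    have hcolF : ∀ X ∈ F, ∀ p ∈ X, ∀ q ∈ X, OOC7.col p = OOC7.col q → p = q := by
      intro X hX p hp q hq hpq
      obtain ⟨A, hA, t, rfl⟩ := hmem X hX
      obtain ⟨p', hp', rfl⟩ := Finset.mem_image.mp hp
      obtain ⟨q', hq', rfl⟩ := Finset.mem_image.mp hq
      have : p' = q' := hcolC A hA p' hp' q' hq' hpq
      rw [this]
    -- pairwise intersections
    have hintF : ∀ X ∈ F, ∀ Y ∈ F, X ≠ Y → (X ∩ Y).card ≤ lam := by
      intro X hX Y hY hne
      obtain ⟨A, hA, t, rfl⟩ := hmem X hX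
      obtain ⟨B, hB, s, rfl⟩ := hmem Y hY
      have hYshift : tshift s B = tshift t (tshift (s - t) B) := by
        rw [OOC7.tshift_tshift]; congr 1; abel
      have hcardeq : (tshift t A ∩ tshift s B).card = (A ∩ tshift (s - t) B).card := by
        rw [hYshift, ← OOC7.tshift_inter, OOC7.tshift_card]
      rw [hcardeq]
      by_cases hAB : A = B
      · subst hAB
        have hts : s - t ≠ 0 := by
          intro h0
          apply hne
          have : s = t := by
            have := sub_eq_zero.mp h0; exact this
          rw [this]
        exact le_trans (hauto A hA (s - t) (OOC7.val_ne_zero _ hts)) (Nat.zero_le lam)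
      · exact hcross A hA B hB hAB (s - t)
    -- cardinality of F
    have hinj : Set.InjOn (fun p : Finset (Fin Λ × Fin S × Fin T) × Fin T => tshift p.2 p.1)
        ↑(C ×ˢ (Finset.univ : Finset (Fin T))) := by
      rintro ⟨A, t⟩ hAt ⟨B, s⟩ hBs heq
      have hA : A ∈ C := (Finset.mem_product.mp (Finset.mem_coe.mp hAt)).1
      have hB : B ∈ C := (Finset.mem_product.mp (Finset.mem_coe.mp hBs)).1
      simp only at heq
      have hAB : A = tshift (s - t) B := hshift_eq A B t s heq
      by_cases hABeq : A = B
      · subst hABeq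
        by_cases hts : t = s
        · rw [hts]
        · exfalso
          have hst : s - t ≠ 0 := sub_ne_zero.mpr (fun hc => hts hc.symm)
          have h0 := hauto A hA (s - t) (OOC7.val_ne_zero _ hst)
          have hiA : A ∩ tshift (s - t) A = A := by
            rw [← hAB]; exact Finset.inter_self A
          rw [hiA, hcard A hA] at h0
          omega
      · exfalso
        have h0 := hcross A hA B hB hABeq (s - t)
        have hiA : A ∩ tshift (s - t) B = A := by
          rw [← hAB]; exact Finset.inter_self A
        rw [hiA, hcard A hA] at h0
        omega
    have hFcard : F.card = C.card * T := by
      rw [hF, Finset.card_image_of_injOn hinj, Finset.card_product, Finset.card_univ,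
        Fintype.card_fin]
    -- final counting with P = ∅
    have hm : ∀ q : Fin Λ × Fin S × Fin T, q ∉ (∅ : Finset (Fin Λ × Fin S × Fin T)) →
        (F.filter (fun X => insert q (∅ : Finset (Fin Λ × Fin S × Fin T)) ⊆ X)).card ≤ J := by
      intro q _
      apply OOC7.nest w lam hlw F hwF hcolF hintF lam le_rfl
      simp
    have hbound := OOC7.count w J F hwF hcolF ∅ hm
    rw [Finset.card_empty, Nat.sub_zero, Nat.sub_zero,
      Finset.filter_true_of_mem (fun X _ => Finset.empty_subset X), hFcard] at hbound
    have h2 : T * (w * C.card) ≤ T * (Λ * S * J) := by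
      calc T * (w * C.card) = w * (C.card * T) := by ring
        _ ≤ T * (Λ * S) * J := hbound
        _ = T * (Λ * S * J) := by ring
    have h3 : w * C.card ≤ Λ * S * J := Nat.le_of_mul_le_mul_left h2 hT
    rw [Nat.le_div_iff_mul_le hwpos, mul_comm]
    exact h3
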